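/- arXiv:1810.07351 — 6 statements merged into one kernel-verified Lean document; each statement's English description precedes it below -/
import Mathlib

section
/- Let ψ be a unit vector in a complex Hilbert space, let k ≥ 1, and let A₁, …, A_k be bounded operators with ‖A_i‖ ≤ M and Var_ψ(A_i) ≤ ε² for every i, where M, ε ≥ 0. Then |⟨ψ, A₁ A₂ ⋯ A_k ψ⟩ − ∏_{i=1}^k ⟨ψ, A_i ψ⟩| ≤ (k−1) M^{k−1} ε. -/
/-- Variance of a bounded operator in a state: `Var ψ A = ‖(A - ⟨ψ, Aψ⟩)ψ‖ ^ 2`. -/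
noncomputable def Var {H : Type*} [NormedAddCommGroup H] [InnerProductSpace ℂ H]
    (ψ : H) (A : H →L[ℂ] H) : ℝ :=
  ‖A ψ - (inner ℂ ψ (A ψ) : ℂ) • ψ‖ ^ 2

section aux
variable {H : Type*} [NormedAddCommGroup H] [InnerProductSpace ℂ H] [CompleteSpace H]

lemma norm_list_prod_le (M : ℝ) (hM : 0 ≤ M) :
    ∀ L : List (H →L[ℂ] H), (∀ a ∈ L, ‖a‖ ≤ M) → ‖L.prod‖ ≤ M ^ L.length := by
  intro L
  induction L with
  | nil => intro _; simpa [ContinuousLinearMap.one_def] using ContinuousLinearMap.norm_id_le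
  | cons a L ih =>
      intro h
      have h1 : ‖a‖ ≤ M := h a (by simp)
      have h2 : ‖L.prod‖ ≤ M ^ L.length := ih (fun b hb => h b (by simp [hb]))
      calc ‖(a :: L).prod‖ ≤ ‖a‖ * ‖L.prod‖ := by
            simpa using norm_mul_le a L.prod
        _ ≤ M * M ^ L.length := by
            exact mul_le_mul h1 h2 (norm_nonneg _) hM
        _ = M ^ (a :: L).length := by rw [List.length_cons, pow_succ']

lemma aux_list (ψ : H) (hψ : ‖ψ‖ = 1) (M ε : ℝ) (hM : 0 ≤ M) (hε : 0 ≤ ε)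
    (L : List (H →L[ℂ] H)) (hne : L ≠ [])
    (hnorm : ∀ a ∈ L, ‖a‖ ≤ M) (hvar : ∀ a ∈ L, Var ψ a ≤ ε ^ 2) :
    ‖(inner ℂ ψ (L.prod ψ) : ℂ)
        - (L.map (fun a => (inner ℂ ψ (a ψ) : ℂ))).prod‖
      ≤ ((L.length : ℝ) - 1) * M ^ (L.length - 1) * ε := by
  induction L using List.reverseRecOn with
  | nil => exact absurd rfl hne
  | append_singleton L A ih =>
      rcases eq_or_ne L [] with rfl | hL
      · simp
      -- notation
      set lam : ℂ := inner ℂ ψ (A ψ) with hlam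
      set r : H := A ψ - lam • ψ with hrdef
      have hAψ : A ψ = lam • ψ + r := by rw [hrdef]; abel
      have hrle : ‖r‖ ≤ ε := by
        have h2 : ‖r‖ ^ 2 ≤ ε ^ 2 := hvar A (by simp)
        nlinarith [norm_nonneg r]
      have hlamle : ‖lam‖ ≤ M := by
        have h1 : ‖(inner ℂ ψ (A ψ) : ℂ)‖ ≤ ‖ψ‖ * ‖A ψ‖ := norm_inner_le_norm _ _
        have h2 : ‖A ψ‖ ≤ ‖A‖ * ‖ψ‖ := A.le_opNorm ψ
        have h3 : ‖A‖ ≤ M := hnorm A (by simp)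
        calc ‖lam‖ = ‖(inner ℂ ψ (A ψ) : ℂ)‖ := rfl
          _ ≤ ‖ψ‖ * ‖A ψ‖ := h1
          _ ≤ 1 * (M * 1) := by
              rw [hψ]
              gcongr
              calc ‖A ψ‖ ≤ ‖A‖ * ‖ψ‖ := h2
                _ ≤ M * 1 := by rw [hψ]; gcongr
          _ = M := by ring
      have hProdNorm : ‖L.prod‖ ≤ M ^ L.length :=
        norm_list_prod_le M hM L (fun a ha => hnorm a (by simp [ha]))
      -- expand the product applied to ψ
      have hexp : (L ++ [A]).prod ψ = lam • (L.prod ψ) + L.prod r := by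
        rw [List.prod_append]
        simp only [List.prod_singleton, ContinuousLinearMap.mul_apply]
        rw [hAψ, map_add, map_smul]
      have hinner : (inner ℂ ψ ((L ++ [A]).prod ψ) : ℂ)
          = lam * inner ℂ ψ (L.prod ψ) + inner ℂ ψ (L.prod r) := by
        rw [hexp, inner_add_right, inner_smul_right]
      have hmapprod : ((L ++ [A]).map (fun a => (inner ℂ ψ (a ψ) : ℂ))).prod
          = (L.map (fun a => (inner ℂ ψ (a ψ) : ℂ))).prod * lam := by
        simp [hlam]
      set X : ℂ := inner ℂ ψ (L.prod ψ)
      set P : ℂ := (L.map (fun a => (inner ℂ ψ (a ψ) : ℂ))).prod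
      have hkey : (inner ℂ ψ ((L ++ [A]).prod ψ) : ℂ)
          - ((L ++ [A]).map (fun a => (inner ℂ ψ (a ψ) : ℂ))).prod
          = lam * (X - P) + inner ℂ ψ (L.prod r) := by
        rw [hinner, hmapprod]; ring
      have hE : ‖(inner ℂ ψ (L.prod r) : ℂ)‖ ≤ M ^ L.length * ε := by
        calc ‖(inner ℂ ψ (L.prod r) : ℂ)‖ ≤ ‖ψ‖ * ‖L.prod r‖ :=
              norm_inner_le_norm _ _
          _ = ‖L.prod r‖ := by rw [hψ, one_mul]
          _ ≤ ‖L.prod‖ * ‖r‖ := (L.prod).le_opNorm r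
          _ ≤ M ^ L.length * ε := mul_le_mul hProdNorm hrle (norm_nonneg _) (pow_nonneg hM _)
      have hIH : ‖X - P‖ ≤ ((L.length : ℝ) - 1) * M ^ (L.length - 1) * ε :=
        ih hL (fun a ha => hnorm a (by simp [ha])) (fun a ha => hvar a (by simp [ha]))
      have hn : 1 ≤ L.length := List.length_pos_iff.mpr hL
      obtain ⟨n, hn'⟩ : ∃ n, L.length = n + 1 := ⟨L.length - 1, (Nat.succ_pred_eq_of_pos hn).symm⟩
      have hlen : ((L ++ [A]).length : ℝ) - 1 = (n : ℝ) + 1 := by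
        simp only [List.length_append, List.length_singleton, hn']
        push_cast; ring
      have hlen2 : (L ++ [A]).length - 1 = n + 1 := by simp [hn']
      rw [hkey, hlen2]
      calc ‖lam * (X - P) + inner ℂ ψ (L.prod r)‖
          ≤ ‖lam * (X - P)‖ + ‖(inner ℂ ψ (L.prod r) : ℂ)‖ := by
            exact norm_add_le _ _
        _ = ‖lam‖ * ‖X - P‖ + ‖(inner ℂ ψ (L.prod r) : ℂ)‖ := by
            rw [norm_mul]
        _ ≤ M * (((L.length : ℝ) - 1) * M ^ (L.length - 1) * ε) + M ^ L.length * ε := by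
            exact add_le_add (mul_le_mul hlamle hIH (norm_nonneg _) hM) hE
        _ = M * (((n : ℝ) + 1 - 1) * M ^ n * ε) + M ^ (n + 1) * ε := by
            rw [hn']; norm_num
        _ ≤ ((L ++ [A]).length - 1 : ℝ) * M ^ (n + 1) * ε := by
            rw [hlen]
            have : M * (((n : ℝ) + 1 - 1) * M ^ n * ε) = (n : ℝ) * M ^ (n+1) * ε := by
              rw [pow_succ]; ring
            rw [this]; ring_nf
            nlinarith [pow_nonneg hM (n+1)]

end aux

/-- Expectation of a product of approximate eigen-operators: if each `A i` has norm at most `M`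
and variance at most `ε ^ 2` in the unit state `ψ`, then the expectation of the (ordered)
product `A 0 * A 1 * ⋯ * A (k-1)` differs from the product of the expectations by at most
`(k - 1) * M ^ (k - 1) * ε`. -/
theorem expectation_of_product {H : Type*} [NormedAddCommGroup H] [InnerProductSpace ℂ H]
    [CompleteSpace H] (ψ : H) (hψ : ‖ψ‖ = 1) (k : ℕ) (hk : 1 ≤ k)
    (A : Fin k → H →L[ℂ] H) (M ε : ℝ) (hM : 0 ≤ M) (hε : 0 ≤ ε)
    (hnorm : ∀ i, ‖A i‖ ≤ M) (hvar : ∀ i, Var ψ (A i) ≤ ε ^ 2) :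
    ‖(inner ℂ ψ ((List.ofFn A).prod ψ) : ℂ) - ∏ i, (inner ℂ ψ (A i ψ) : ℂ)‖
      ≤ ((k : ℝ) - 1) * M ^ (k - 1) * ε := by
  have hne : List.ofFn A ≠ [] := by
    simp [List.ofFn_eq_nil_iff]
    omega
  have h1 : ∀ a ∈ List.ofFn A, ‖a‖ ≤ M := by
    intro a ha
    obtain ⟨i, rfl⟩ := List.mem_ofFn.mp ha
    exact hnorm i
  have h2 : ∀ a ∈ List.ofFn A, Var ψ a ≤ ε ^ 2 := by
    intro a ha
    obtain ⟨i, rfl⟩ := List.mem_ofFn.mp ha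
    exact hvar i
  have := aux_list ψ hψ M ε hM hε (List.ofFn A) hne h1 h2
  have hmap : ((List.ofFn A).map (fun a => (inner ℂ ψ (a ψ) : ℂ))).prod
      = ∏ i, (inner ℂ ψ (A i ψ) : ℂ) := by
    rw [List.map_ofFn, List.prod_ofFn]
    rfl
  have hlen : (List.ofFn A).length = k := List.length_ofFn
  rw [hmap, hlen] at this
  exact this
end

section
/- Let W₁ and W₂ be unitary operators on a complex Hilbert space, set W = W₁W₂, and let ψ be a unit vector. If δ ≥ |⟨ψ, W₁W₂ψ⟩ − ⟨ψ, W₁ψ⟩⟨ψ, W₂ψ⟩|, then Var_ψ(W₁) ≤ Var_ψ(W) + 2δ. -/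
lemma Var_eq {H : Type*} [NormedAddCommGroup H] [InnerProductSpace ℂ H]
    (ψ : H) (hψ : ‖ψ‖ = 1) (A : H →L[ℂ] H) :
    Var ψ A = ‖A ψ‖ ^ 2 - ‖(inner ℂ ψ (A ψ) : ℂ)‖ ^ 2 := by
  set c : ℂ := inner ℂ ψ (A ψ)
  have h : Var ψ A = ‖A ψ‖ ^ 2 - 2 * Complex.re (inner ℂ (A ψ) (c • ψ) : ℂ) + ‖c • ψ‖ ^ 2 := by
    rw [Var]; exact @norm_sub_sq ℂ H _ _ _ (A ψ) (c • ψ)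
  have hi : (inner ℂ (A ψ) (c • ψ) : ℂ) = c * starRingEnd ℂ c := by
    rw [inner_smul_right, ← inner_conj_symm]
  have hre : Complex.re (inner ℂ (A ψ) (c • ψ) : ℂ) = ‖c‖ ^ 2 := by
    rw [hi, Complex.mul_conj]
    simp [Complex.sq_norm]
  have hn : ‖c • ψ‖ ^ 2 = ‖c‖ ^ 2 := by
    rw [norm_smul, hψ]
    simp
  rw [h, hre, hn]; ring

/-- If the expectation of a product of two unitaries in a unit state `ψ` approximately
factorizes with error `δ`, then `Var ψ W₁ ≤ Var ψ (W₁ * W₂) + 2δ`. -/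
theorem variance_of_factor {H : Type*} [NormedAddCommGroup H] [InnerProductSpace ℂ H]
    [CompleteSpace H] (W₁ W₂ : H →L[ℂ] H)
    (hW₁ : W₁ ∈ unitary (H →L[ℂ] H)) (hW₂ : W₂ ∈ unitary (H →L[ℂ] H))
    (ψ : H) (hψ : ‖ψ‖ = 1) (δ : ℝ)
    (hδ : ‖(inner ℂ ψ ((W₁ * W₂) ψ) : ℂ)
        - (inner ℂ ψ (W₁ ψ) : ℂ) * (inner ℂ ψ (W₂ ψ) : ℂ)‖ ≤ δ) :
    Var ψ W₁ ≤ Var ψ (W₁ * W₂) + 2 * δ := by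
  set a : ℂ := inner ℂ ψ (W₁ ψ) with ha
  set b : ℂ := inner ℂ ψ (W₂ ψ) with hb
  set c : ℂ := inner ℂ ψ ((W₁ * W₂) ψ) with hc
  have hW : W₁ * W₂ ∈ unitary (H →L[ℂ] H) := mul_mem hW₁ hW₂
  have h1 : ‖W₁ ψ‖ = 1 := by rw [W₁.norm_map_of_mem_unitary hW₁, hψ]
  have h2 : ‖W₂ ψ‖ = 1 := by rw [W₂.norm_map_of_mem_unitary hW₂, hψ]
  have h3 : ‖(W₁ * W₂) ψ‖ = 1 := by rw [(W₁ * W₂).norm_map_of_mem_unitary hW, hψ]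
  have hale : ‖a‖ ≤ 1 := by
    calc ‖a‖ ≤ ‖ψ‖ * ‖W₁ ψ‖ := by simpa [ha] using @norm_inner_le_norm ℂ H _ _ _ ψ (W₁ ψ)
    _ = 1 := by rw [hψ, h1, mul_one]
  have hble : ‖b‖ ≤ 1 := by
    calc ‖b‖ ≤ ‖ψ‖ * ‖W₂ ψ‖ := by simpa [hb] using @norm_inner_le_norm ℂ H _ _ _ ψ (W₂ ψ)
    _ = 1 := by rw [hψ, h2, mul_one]
  have hcle : ‖c‖ ≤ 1 := by
    calc ‖c‖ ≤ ‖ψ‖ * ‖(W₁ * W₂) ψ‖ := by simpa [hc] using @norm_inner_le_norm ℂ H _ _ _ ψ ((W₁ * W₂) ψ)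
    _ = 1 := by rw [hψ, h3, mul_one]
  have htri : ‖c‖ ≤ ‖a‖ * ‖b‖ + δ := by
    calc ‖c‖ ≤ ‖(c - a * b)‖ + ‖(a * b)‖ := by
          simpa using norm_add_le (c - a * b) (a * b)
    _ ≤ δ + ‖a‖ * ‖b‖ := by
          rw [norm_mul]; exact add_le_add_left hδ _
    _ = ‖a‖ * ‖b‖ + δ := by ring
  rw [Var_eq ψ hψ W₁, Var_eq ψ hψ (W₁ * W₂), h1, h3, ← ha, ← hc]
  have h0a : 0 ≤ ‖a‖ := norm_nonneg a
  have h0b : 0 ≤ ‖b‖ := norm_nonneg b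
  have h0c : 0 ≤ ‖c‖ := norm_nonneg c
  have hδ0 : 0 ≤ δ := le_trans (norm_nonneg _) hδ
  have hd : ‖c‖ - ‖a‖ ≤ δ := by
    nlinarith [mul_le_of_le_one_right h0a hble]
  have hs : ‖c‖ + ‖a‖ ≤ 2 := by linarith
  nlinarith [mul_le_mul hd hs (by positivity) hδ0]
end

section
/- Let A be a bounded self-adjoint operator on a complex Hilbert space, ψ a unit vector, and f : ℝ → ℝ a differentiable function with |f′(x)| ≤ K for all x ∈ ℝ. Then Var_ψ(f(A)) ≤ K² Var_ψ(A), where f(A) denotes the continuous functional calculus of f applied to A. -/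
open RCLike

/-- The variance minimizes `‖Bψ - c • ψ‖ ^ 2` over `c`. -/
lemma Var_le_norm_sub_smul_sq {H : Type*} [NormedAddCommGroup H] [InnerProductSpace ℂ H]
    (ψ : H) (hψ : ‖ψ‖ = 1) (B : H →L[ℂ] H) (c : ℂ) :
    Var ψ B ≤ ‖B ψ - c • ψ‖ ^ 2 := by
  set m : ℂ := inner ℂ ψ (B ψ) with hm
  have hψψ : (inner ℂ ψ ψ : ℂ) = 1 := by
    rw [inner_self_eq_norm_sq_to_K, hψ]; norm_num
  have horth : (inner ℂ (B ψ - m • ψ) ψ : ℂ) = 0 := by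
    rw [inner_sub_left, inner_smul_left, hψψ, mul_one, ← inner_conj_symm (B ψ) ψ, hm,
      sub_self]
  have hdecomp : B ψ - c • ψ = (B ψ - m • ψ) + (m - c) • ψ := by
    rw [sub_smul]; abel
  have hcross : re (inner ℂ (B ψ - m • ψ) ((m - c) • ψ) : ℂ) = 0 := by
    rw [inner_smul_right, horth, mul_zero, map_zero]
  calc Var ψ B = ‖B ψ - m • ψ‖ ^ 2 := rfl
    _ ≤ ‖B ψ - m • ψ‖ ^ 2 + (2 * re (inner ℂ (B ψ - m • ψ) ((m - c) • ψ) : ℂ)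
          + ‖(m - c) • ψ‖ ^ 2) := by
        rw [hcross]; nlinarith [sq_nonneg ‖(m - c) • ψ‖]
    _ = ‖(B ψ - m • ψ) + (m - c) • ψ‖ ^ 2 := by rw [norm_add_sq (𝕜 := ℂ)]; ring
    _ = ‖B ψ - c • ψ‖ ^ 2 := by rw [← hdecomp]

/-- If `A` is bounded self-adjoint, `ψ` is a unit vector and `f : ℝ → ℝ` is differentiable with
`|f'| ≤ K` everywhere, then `Var ψ (f A) ≤ K ^ 2 * Var ψ A`, where `f A = cfc f A` is the
continuous functional calculus of `f` applied to `A`. -/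
theorem variance_of_functional_calculus {H : Type*} [NormedAddCommGroup H]
    [InnerProductSpace ℂ H] [CompleteSpace H]
    (A : H →L[ℂ] H) (hA : IsSelfAdjoint A) (ψ : H) (hψ : ‖ψ‖ = 1)
    (f : ℝ → ℝ) (hf : Differentiable ℝ f) (K : ℝ) (hK : ∀ x : ℝ, |deriv f x| ≤ K) :
    Var ψ (cfc f A) ≤ K ^ 2 * Var ψ A := by
  have hsymm := (ContinuousLinearMap.isSelfAdjoint_iff_isSymmetric.mp hA)
  have hK0 : 0 ≤ K := (abs_nonneg _).trans (hK 0)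
  -- μ := ⟨ψ, Aψ⟩ is real
  set μC : ℂ := inner ℂ ψ (A ψ) with hμC
  have hμreal : (starRingEnd ℂ) μC = μC := by
    rw [hμC, inner_conj_symm]
    exact hsymm ψ ψ
  set μ : ℝ := μC.re with hμ
  have hμeq : μC = (μ : ℂ) := (Complex.conj_eq_iff_re.mp hμreal).symm
  set g : ℝ → ℝ := fun x => f x - f μ with hg
  have hgc : Continuous g := hf.continuous.sub continuous_const
  have hfc : Continuous f := hf.continuous
  -- pointwise bound via MVT
  have hpt : ∀ x : ℝ, g x ^ 2 ≤ K ^ 2 * (x - μ) ^ 2 := by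
    intro x
    have h1 : |f x - f μ| ≤ K * |x - μ| := by
      simpa [Real.norm_eq_abs] using
        convex_univ.norm_image_sub_le_of_norm_deriv_le
          (fun y _ => (hf y)) (fun y _ => by simpa [Real.norm_eq_abs] using hK y)
          (Set.mem_univ μ) (Set.mem_univ x)
    have h2 : (f x - f μ) ^ 2 ≤ (K * |x - μ|) ^ 2 := by
      rw [← sq_abs (f x - f μ)]
      exact pow_le_pow_left₀ (abs_nonneg _) h1 2
    calc g x ^ 2 = (f x - f μ) ^ 2 := rfl
      _ ≤ (K * |x - μ|) ^ 2 := h2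
      _ = K ^ 2 * (x - μ) ^ 2 := by rw [mul_pow, sq_abs]
  -- notation for operators
  set T : H →L[ℂ] H := cfc g A with hT
  have hTsa : IsSelfAdjoint T := cfc_predicate g A
  have hTsymm := (ContinuousLinearMap.isSelfAdjoint_iff_isSymmetric.mp hTsa)
  set S : H →L[ℂ] H := A - algebraMap ℝ (H →L[ℂ] H) μ with hS
  have hSALG : cfc (fun x : ℝ => x - μ) A = S := by
    rw [hS, cfc_sub _ _ A (by fun_prop) (by fun_prop), cfc_id' ℝ A, cfc_const μ A]
  have hSsa : IsSelfAdjoint S := by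
    rw [← hSALG]; exact cfc_predicate _ A
  have hSsymm := (ContinuousLinearMap.isSelfAdjoint_iff_isSymmetric.mp hSsa)
  -- algebraMap applied to ψ
  have halg : ∀ r : ℝ, (algebraMap ℝ (H →L[ℂ] H) r) ψ = (r : ℂ) • ψ := by
    intro r
    rw [Algebra.algebraMap_eq_smul_one, ContinuousLinearMap.smul_apply,
      ContinuousLinearMap.one_apply, ← algebraMap_smul ℂ r ψ, Complex.coe_algebraMap]
  -- step 1: Var ≤ ‖T ψ‖ ^ 2
  have hTψ : T ψ = cfc f A ψ - ((f μ : ℝ) : ℂ) • ψ := by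
    rw [hT, hg, cfc_sub _ _ A (by fun_prop) (by fun_prop), cfc_const (f μ) A,
      ContinuousLinearMap.sub_apply, halg]
  have step1 : Var ψ (cfc f A) ≤ ‖T ψ‖ ^ 2 := by
    rw [hTψ]
    exact Var_le_norm_sub_smul_sq ψ hψ (cfc f A) _
  -- step 2: ‖T ψ‖ ^ 2 = re ⟪ψ, cfc (g ^ 2) A ψ⟫
  have hT2 : cfc (fun x => g x ^ 2) A = T ^ 2 := by
    rw [hT]; exact cfc_pow g 2 A
  have step2 : ‖T ψ‖ ^ 2 = re (inner ℂ ψ ((cfc (fun x => g x ^ 2) A) ψ) : ℂ) := by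
    have key : (inner ℂ ψ (T (T ψ)) : ℂ) = inner ℂ (T ψ) (T ψ) := (hTsymm ψ (T ψ)).symm
    rw [hT2, pow_two T, ContinuousLinearMap.mul_apply, key, inner_self_eq_norm_sq]
  -- step 3: operator monotonicity
  have hmono : cfc (fun x => g x ^ 2) A ≤ cfc (fun x => K ^ 2 * (x - μ) ^ 2) A :=
    cfc_mono (fun x _ => hpt x) (hgc.pow 2).continuousOn
      (by fun_prop : Continuous fun x : ℝ => K ^ 2 * (x - μ) ^ 2).continuousOn
  have hpos := ((ContinuousLinearMap.le_def _ _).mp hmono).inner_nonneg_right ψ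
  have step3 : re (inner ℂ ψ ((cfc (fun x => g x ^ 2) A) ψ) : ℂ)
      ≤ re (inner ℂ ψ ((cfc (fun x => K ^ 2 * (x - μ) ^ 2) A) ψ) : ℂ) := by
    rw [ContinuousLinearMap.sub_apply, inner_sub_right] at hpos
    have h := (Complex.le_def.mp hpos).1
    simp only [Complex.zero_re, Complex.sub_re, sub_nonneg] at h
    exact h
  -- step 4: identify the RHS
  have hKS : cfc (fun x => K ^ 2 * (x - μ) ^ 2) A = K ^ 2 • S ^ 2 := by
    rw [cfc_const_mul (K ^ 2) (fun x => (x - μ) ^ 2) A (by fun_prop),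
      cfc_pow (fun x => x - μ) 2 A (by fun_prop), hSALG]
  have hSψ : S ψ = A ψ - μC • ψ := by
    rw [hS, ContinuousLinearMap.sub_apply, halg, hμeq]
  have step4 : re (inner ℂ ψ ((cfc (fun x => K ^ 2 * (x - μ) ^ 2) A) ψ) : ℂ)
      = K ^ 2 * Var ψ A := by
    have hsm : (inner ℂ ψ ((K ^ 2 : ℝ) • (S ^ 2) ψ) : ℂ)
        = (K ^ 2 : ℝ) • (inner ℂ ψ ((S ^ 2) ψ) : ℂ) := by
      rw [← algebraMap_smul ℂ (K ^ 2 : ℝ) ((S ^ 2) ψ),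
        ← algebraMap_smul ℂ (K ^ 2 : ℝ) (inner ℂ ψ ((S ^ 2) ψ) : ℂ), inner_smul_right,
        smul_eq_mul]
    have key : (inner ℂ ψ (S (S ψ)) : ℂ) = inner ℂ (S ψ) (S ψ) := (hSsymm ψ (S ψ)).symm
    rw [hKS, ContinuousLinearMap.smul_apply, hsm, smul_re]
    congr 1
    rw [pow_two S, ContinuousLinearMap.mul_apply, key, inner_self_eq_norm_sq, hSψ]
    rfl
  calc Var ψ (cfc f A) ≤ ‖T ψ‖ ^ 2 := step1
    _ = _ := step2
    _ ≤ _ := step3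
    _ = K ^ 2 * Var ψ A := step4
end

section
/- Let A be a bounded self-adjoint operator on a complex Hilbert space, ψ a unit vector, and φ ∈ ℝ. Then Var_ψ(exp(iφA)) ≤ φ² Var_ψ(A), where exp(iφA) denotes the operator exponential of iφA. -/
set_option maxHeartbeats 1000000
set_option synthInstance.maxHeartbeats 200000
set_option linter.unusedSectionVars false

open NormedSpace Complex

section aux
variable {H : Type*} [NormedAddCommGroup H] [InnerProductSpace ℂ H] [CompleteSpace H]

lemma unitary_norm_apply {U : H →L[ℂ] H} (hU : U ∈ unitary (H →L[ℂ] H)) (v : H) :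
    ‖U v‖ = ‖v‖ := by
  have h1 : star U * U = 1 := (Unitary.mem_iff.mp hU).1
  have h2 : (inner ℂ (U v) (U v) : ℂ) = inner ℂ v v := by
    rw [← ContinuousLinearMap.adjoint_inner_right, ← ContinuousLinearMap.star_eq_adjoint,
      ← ContinuousLinearMap.comp_apply, ← ContinuousLinearMap.mul_def, h1,
      ContinuousLinearMap.one_apply]
  have h3 : ‖U v‖ ^ 2 = ‖v‖ ^ 2 := by
    rw [inner_self_eq_norm_sq_to_K, inner_self_eq_norm_sq_to_K] at h2
    exact_mod_cast h2
  nlinarith [norm_nonneg (U v), norm_nonneg v]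

lemma var_le {ψ : H} (hψ : ‖ψ‖ = 1) (A : H →L[ℂ] H) (c : ℂ) :
    Var ψ A ≤ ‖A ψ - c • ψ‖ ^ 2 := by
  set v := A ψ with hv
  set m : ℂ := inner ℂ ψ v with hm
  have hψψ : (inner ℂ ψ ψ : ℂ) = 1 := by
    rw [inner_self_eq_norm_sq_to_K, hψ]; norm_num
  have horth : (inner ℂ (v - m • ψ) ((m - c) • ψ) : ℂ) = 0 := by
    have hvψ : (inner ℂ v ψ : ℂ) = (starRingEnd ℂ) m := by rw [hm, inner_conj_symm]
    rw [inner_smul_right, inner_sub_left, inner_smul_left, hψψ, mul_one, hvψ]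
    ring
  have key : v - c • ψ = (v - m • ψ) + (m - c) • ψ := by
    rw [sub_smul]; abel
  have hre : RCLike.re (inner ℂ (v - m • ψ) ((m - c) • ψ) : ℂ) = 0 := by
    rw [horth]; simp
  calc Var ψ A = ‖v - m • ψ‖ ^ 2 := rfl
    _ ≤ ‖v - m • ψ‖ ^ 2 + (2 * RCLike.re (inner ℂ (v - m • ψ) ((m - c) • ψ) : ℂ)
          + ‖(m - c) • ψ‖ ^ 2) := by
        rw [hre]
        have := sq_nonneg ‖(m - c) • ψ‖
        linarith
    _ = ‖v - c • ψ‖ ^ 2 := by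
        rw [key, norm_add_sq (𝕜 := ℂ)]; ring
end aux

/-- For a bounded self-adjoint operator `A`, a unit vector `ψ` and `φ : ℝ`, the variance of the
unitary `exp (i φ A)` is controlled by that of `A`: `Var ψ (exp (iφA)) ≤ φ ^ 2 * Var ψ A`. -/
theorem variance_of_exponential {H : Type*} [NormedAddCommGroup H] [InnerProductSpace ℂ H]
    [CompleteSpace H] (A : H →L[ℂ] H) (hA : IsSelfAdjoint A)
    (ψ : H) (hψ : ‖ψ‖ = 1) (φ : ℝ) :
    Var ψ (NormedSpace.exp ((Complex.I * (φ : ℂ)) • A)) ≤ φ ^ 2 * Var ψ A := by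
  set a : ℂ := inner ℂ ψ (A ψ) with ha
  have haR : (starRingEnd ℂ) a = a := by
    rw [ha, inner_conj_symm]
    exact hA.isSymmetric ψ ψ
  have haRe : a = ((a.re : ℝ) : ℂ) := (Complex.conj_eq_iff_re.mp haR).symm
  set B : H →L[ℂ] H := A - a • 1 with hB
  have hBsa : IsSelfAdjoint B := by
    rw [IsSelfAdjoint, hB, star_sub, star_smul, star_one, hA.star_eq, Complex.star_def, haR]
  have hBψ : B ψ = A ψ - a • ψ := by
    simp [hB, ContinuousLinearMap.sub_apply]
  -- the exponentials of t • (I • B) are unitary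
  have hx : star (Complex.I • B) = -(Complex.I • B) := by
    rw [star_smul, hBsa.star_eq, Complex.star_def, Complex.conj_I, neg_smul]
  have hsm : ∀ t : ℝ, (t : ℝ) • (Complex.I • B) = (Complex.I * (t : ℂ)) • B := fun t => by
    rw [← smul_one_smul ℂ (t : ℝ) (Complex.I • B), Complex.real_smul, mul_one, smul_smul,
      mul_comm]
  let +nondep : NormedAlgebra ℚ (H →L[ℂ] H) := .restrictScalars ℚ ℂ _
  have hUt : ∀ t : ℝ, NormedSpace.exp (t • (Complex.I • B)) ∈ unitary (H →L[ℂ] H) := by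
    intro t
    apply NormedSpace.exp_mem_unitary_of_mem_skewAdjoint
    rw [hsm t, skewAdjoint.mem_iff, star_smul, hBsa.star_eq, Complex.star_def]
    have : (starRingEnd ℂ) (Complex.I * (t : ℂ)) = -(Complex.I * (t : ℂ)) := by
      simp [map_mul, Complex.conj_I, Complex.conj_ofReal]
    rw [this, neg_smul]
  -- derivative of t ↦ exp(t • (I•B)) ψ
  have hf : ∀ t : ℝ, HasDerivAt (fun u : ℝ => NormedSpace.exp (u • (Complex.I • B)))
      (NormedSpace.exp (t • (Complex.I • B)) * (Complex.I • B)) t := by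
    intro t
    have h := hasDerivAt_exp_smul_const (𝕂 := ℝ) (Complex.I • B) t
    exact h
  have hg : ∀ t : ℝ, HasDerivAt (fun u : ℝ => NormedSpace.exp (u • (Complex.I • B)) ψ)
      ((NormedSpace.exp (t • (Complex.I • B)) * (Complex.I • B)) ψ) t := by
    intro t
    exact (((ContinuousLinearMap.apply ℂ H ψ).restrictScalars ℝ).hasFDerivAt).comp_hasDerivAt
      t (hf t)
  have hnorm : ∀ t : ℝ,
      ‖(NormedSpace.exp (t • (Complex.I • B)) * (Complex.I • B)) ψ‖ = ‖B ψ‖ := by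
    intro t
    rw [ContinuousLinearMap.mul_apply, unitary_norm_apply (hUt t)]
    simp [norm_smul]
  have hmvt : ‖NormedSpace.exp ((φ : ℝ) • (Complex.I • B)) ψ -
      NormedSpace.exp ((0 : ℝ) • (Complex.I • B)) ψ‖ ≤ ‖B ψ‖ * ‖φ - 0‖ := by
    exact (convex_uIcc (0 : ℝ) φ).norm_image_sub_le_of_norm_hasDerivWithin_le
      (fun t _ => (hg t).hasDerivWithinAt) (fun t _ => le_of_eq (hnorm t))
      Set.left_mem_uIcc Set.right_mem_uIcc
  have hE0 : NormedSpace.exp ((0 : ℝ) • (Complex.I • B)) ψ = ψ := by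
    rw [zero_smul, NormedSpace.exp_zero, ContinuousLinearMap.one_apply]
  set E : H →L[ℂ] H := NormedSpace.exp ((Complex.I * (φ : ℂ)) • B) with hE
  have hEbound : ‖E ψ - ψ‖ ≤ ‖B ψ‖ * |φ| := by
    have := hmvt
    rw [hsm φ, hE0] at this
    simpa using this
  -- decomposition of the main exponential
  set c : ℂ := Complex.exp (Complex.I * (φ : ℂ) * a) with hc
  have hcomm : Commute ((Complex.I * (φ : ℂ) * a) • (1 : H →L[ℂ] H))
      ((Complex.I * (φ : ℂ)) • B) :=
    ((Commute.one_left B).smul_left _).smul_right _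
  have hdecomp : (Complex.I * (φ : ℂ)) • A =
      (Complex.I * (φ : ℂ) * a) • (1 : H →L[ℂ] H) + (Complex.I * (φ : ℂ)) • B := by
    rw [hB, smul_sub, smul_smul]
    abel
  have hUψ : NormedSpace.exp ((Complex.I * (φ : ℂ)) • A) ψ = c • (E ψ) := by
    rw [hdecomp, NormedSpace.exp_add_of_commute hcomm]
    have h1 : NormedSpace.exp ((Complex.I * (φ : ℂ) * a) • (1 : H →L[ℂ] H)) =
        c • (1 : H →L[ℂ] H) := by
      rw [← Algebra.algebraMap_eq_smul_one, ← NormedSpace.algebraMap_exp_comm,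
        Algebra.algebraMap_eq_smul_one, hc, Complex.exp_eq_exp_ℂ]
    rw [h1, ContinuousLinearMap.mul_apply, ContinuousLinearMap.smul_apply,
      ContinuousLinearMap.one_apply, hE]
  have hcnorm : ‖c‖ = 1 := by
    rw [hc, haRe]
    rw [Complex.norm_exp]
    have : (Complex.I * (φ : ℂ) * ((a.re : ℝ) : ℂ)).re = 0 := by
      simp [Complex.mul_re, Complex.mul_im]
    rw [this, Real.exp_zero]
  calc Var ψ (NormedSpace.exp ((Complex.I * (φ : ℂ)) • A))
      ≤ ‖NormedSpace.exp ((Complex.I * (φ : ℂ)) • A) ψ - c • ψ‖ ^ 2 := var_le hψ _ c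
    _ = ‖c • (E ψ - ψ)‖ ^ 2 := by rw [hUψ, smul_sub]
    _ = ‖E ψ - ψ‖ ^ 2 := by rw [norm_smul, hcnorm, one_mul]
    _ ≤ (‖B ψ‖ * |φ|) ^ 2 := by
        apply pow_le_pow_left₀ (norm_nonneg _) hEbound
    _ = φ ^ 2 * ‖B ψ‖ ^ 2 := by rw [mul_pow, _root_.sq_abs]; ring
    _ = φ ^ 2 * Var ψ A := by rw [Var, ← ha, ← hBψ]
end

section
/- Let A be an n×n Hermitian complex matrix and C an m×m Hermitian complex matrix with n, m ≥ 1. If every eigenvalue of the Kronecker sum A ⊗ I_m + I_n ⊗ C is an integer, then there exists ν ∈ ℝ such that λ + ν is an integer for every eigenvalue λ of A, and μ − ν is an integer for every eigenvalue μ of C. -/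
open scoped Kronecker

open Matrix in
private lemma mem_spectrum_of_eigen' {N : Type*} [Fintype N] [DecidableEq N]
    (M : Matrix N N ℂ) (v : N → ℂ) (hv : v ≠ 0) (μ : ℂ) (h : M *ᵥ v = μ • v) :
    μ ∈ spectrum ℂ M := by
  rw [← AlgEquiv.spectrum_eq (Matrix.toLinAlgEquiv <| Pi.basisFun ℂ N),
    ← Module.End.hasEigenvalue_iff_mem_spectrum]
  refine Module.End.hasEigenvalue_of_hasEigenvector ⟨?_, hv⟩
  rw [Module.End.mem_eigenspace_iff]
  show Matrix.toLin' M v = μ • v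
  rw [Matrix.toLin'_apply, h]

open Matrix in
private lemma kron_sum_eigen' (n m : ℕ)
    (A : Matrix (Fin n) (Fin n) ℂ) (C : Matrix (Fin m) (Fin m) ℂ)
    (v : Fin n → ℂ) (w : Fin m → ℂ) (hv : v ≠ 0) (hw : w ≠ 0)
    (lam mu : ℂ) (hAv : A *ᵥ v = lam • v) (hCw : C *ᵥ w = mu • w) :
    lam + mu ∈ spectrum ℂ (A ⊗ₖ (1 : Matrix (Fin m) (Fin m) ℂ) +
        (1 : Matrix (Fin n) (Fin n) ℂ) ⊗ₖ C) := by
  obtain ⟨i0, hi0⟩ := Function.ne_iff.mp hv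
  obtain ⟨k0, hk0⟩ := Function.ne_iff.mp hw
  simp only [Pi.zero_apply] at hi0 hk0
  refine mem_spectrum_of_eigen' _ (fun p => v p.1 * w p.2) ?_ _ ?_
  · intro h
    rcases mul_eq_zero.mp (congrFun h (i0, k0)) with h' | h'
    exacts [hi0 h', hk0 h']
  · funext p
    obtain ⟨i, k⟩ := p
    have h1 : ∑ j, A i j * v j = lam * v i := congrFun hAv i
    have h2 : ∑ l, C k l * w l = mu * w k := congrFun hCw k
    simp only [mulVec, dotProduct, Matrix.add_apply, Matrix.kroneckerMap_apply,
      Pi.smul_apply, smul_eq_mul]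
    rw [Fintype.sum_prod_type]
    simp only [Matrix.one_apply, add_mul, ite_mul, one_mul, zero_mul, Finset.sum_add_distrib,
      mul_ite, mul_zero]
    have e1 : ∑ x : Fin n, ∑ x1 : Fin m, (if k = x1 then A i x * 1 * (v x * w x1) else 0)
        = lam * v i * w k := by
      have : ∀ x : Fin n, ∑ x1 : Fin m, (if k = x1 then A i x * 1 * (v x * w x1) else 0)
          = A i x * v x * w k := by
        intro x
        rw [Finset.sum_ite_eq]
        simp [mul_assoc]
      rw [Finset.sum_congr rfl fun x _ => this x, ← Finset.sum_mul, h1]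
    have e2 : ∑ x : Fin n, ∑ x1 : Fin m, (if i = x then C k x1 * (v x * w x1) else 0)
        = mu * (v i * w k) := by
      rw [Finset.sum_comm]
      have : ∀ x1 : Fin m, ∑ x : Fin n, (if i = x then C k x1 * (v x * w x1) else 0)
          = v i * (C k x1 * w x1) := by
        intro x1
        rw [Finset.sum_ite_eq]
        simp; ring
      rw [Finset.sum_congr rfl fun x _ => this x, ← Finset.mul_sum, h2]
      ring
    rw [e1, e2]
    ring

open Matrix in
private lemma herm_spectrum_eq' {N : Type*} [Fintype N] [DecidableEq N]
    (A : Matrix N N ℂ) (hA : A.IsHermitian) :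
    spectrum ℂ A = Set.range (fun i => (hA.eigenvalues i : ℂ)) := by
  conv_lhs => rw [hA.spectral_theorem]
  rw [AlgEquiv.spectrum_eq (Unitary.conjStarAlgAut ℂ (Matrix N N ℂ) hA.eigenvectorUnitary),
    spectrum_diagonal]
  ext z
  simp [Set.range, Function.comp]

open Matrix in
private lemma herm_eigen_mulVec' {N : Type*} [Fintype N] [DecidableEq N]
    (A : Matrix N N ℂ) (hA : A.IsHermitian) (i : N) :
    A *ᵥ ⇑(hA.eigenvectorBasis i) = ((hA.eigenvalues i : ℂ)) • ⇑(hA.eigenvectorBasis i) := by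
  rw [hA.mulVec_eigenvectorBasis]
  funext x
  simp [Complex.real_smul]

open Matrix in
private lemma herm_eigen_ne_zero' {N : Type*} [Fintype N] [DecidableEq N]
    (A : Matrix N N ℂ) (hA : A.IsHermitian) (i : N) :
    (⇑(hA.eigenvectorBasis i) : N → ℂ) ≠ 0 := by
  intro h
  exact hA.eigenvectorBasis.orthonormal.ne_zero i (by ext x; exact congrFun h x)

/-- If the Kronecker sum `A ⊗ I + I ⊗ C` of two Hermitian matrices has integer spectrum, then
there is a common real shift `ν` making the spectrum of `A` (shifted by `+ν`) and the spectrum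
of `C` (shifted by `-ν`) integer. -/
theorem integer_spectrum_kronecker_sum_shift (n m : ℕ) (hn : 1 ≤ n) (hm : 1 ≤ m)
    (A : Matrix (Fin n) (Fin n) ℂ) (C : Matrix (Fin m) (Fin m) ℂ)
    (hA : A.IsHermitian) (hC : C.IsHermitian)
    (hint : ∀ z ∈ spectrum ℂ (A ⊗ₖ (1 : Matrix (Fin m) (Fin m) ℂ) +
        (1 : Matrix (Fin n) (Fin n) ℂ) ⊗ₖ C), ∃ j : ℤ, z = (j : ℂ)) :
    ∃ ν : ℝ, (∀ lam ∈ spectrum ℂ A, ∃ j : ℤ, lam + (ν : ℂ) = (j : ℂ)) ∧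
      (∀ mu ∈ spectrum ℂ C, ∃ j : ℤ, mu - (ν : ℂ) = (j : ℂ)) := by
  have key : ∀ (i : Fin n) (j : Fin m), ∃ z : ℤ,
      (hA.eigenvalues i : ℂ) + (hC.eigenvalues j : ℂ) = (z : ℂ) := by
    intro i j
    exact hint _ (kron_sum_eigen' n m A C _ _ (herm_eigen_ne_zero' A hA i)
      (herm_eigen_ne_zero' C hC j) _ _ (herm_eigen_mulVec' A hA i) (herm_eigen_mulVec' C hC j))
  have i0 : Fin n := ⟨0, hn⟩
  have j0 : Fin m := ⟨0, hm⟩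
  refine ⟨hC.eigenvalues j0, ?_, ?_⟩
  · intro lam hlam
    rw [herm_spectrum_eq' A hA] at hlam
    obtain ⟨i, rfl⟩ := hlam
    exact key i j0
  · intro mu hmu
    rw [herm_spectrum_eq' C hC] at hmu
    obtain ⟨j, rfl⟩ := hmu
    obtain ⟨z, hz⟩ := key i0 j
    obtain ⟨z0, hz0⟩ := key i0 j0
    refine ⟨z - z0, ?_⟩
    push_cast
    linear_combination hz - hz0
end

section
/- Let U and W be unitary operators on a complex Hilbert space and ψ a unit vector such that Var_ψ(U) ≤ ε² and Var_ψ(W) ≤ ε² for some 0 ≤ ε ≤ 1. Then |⟨ψ, U*WUW*ψ⟩ − 1| ≤ 10ε. -/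
set_option maxHeartbeats 1000000

lemma aux_var {H : Type*} [NormedAddCommGroup H] [InnerProductSpace ℂ H] [CompleteSpace H]
    (V : H →L[ℂ] H) (hV : V ∈ unitary (H →L[ℂ] H)) (ψ : H) (hψ : ‖ψ‖ = 1) :
    ‖V ψ - (inner ℂ ψ (V ψ) : ℂ) • ψ‖ ^ 2 = 1 - ‖(inner ℂ ψ (V ψ) : ℂ)‖ ^ 2 := by
  have h1 : ‖V ψ‖ = 1 := by rw [V.norm_map_of_mem_unitary hV, hψ]
  set c : ℂ := inner ℂ ψ (V ψ) with hc
  have h2 : (inner ℂ (V ψ) (c • ψ) : ℂ) = c * (starRingEnd ℂ) c := by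
    rw [inner_smul_right, ← inner_conj_symm, hc]
  have h3 : RCLike.re (c * (starRingEnd ℂ) c) = ‖c‖ ^ 2 := by
    rw [RCLike.mul_conj]; norm_cast
  rw [norm_sub_sq (𝕜 := ℂ), h2, h3, norm_smul, hψ, h1]
  ring

/-- If a unit vector `ψ` is an approximate eigenvector of the unitaries `U` and `W`
(variances at most `ε ^ 2`, `0 ≤ ε ≤ 1`), then the expectation of the commutator unitary
`U* W U W*` is within `10ε` of `1`. -/
theorem expectation_of_commutator_unitary {H : Type*} [NormedAddCommGroup H]
    [InnerProductSpace ℂ H] [CompleteSpace H]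
    (U W : H →L[ℂ] H) (hU : U ∈ unitary (H →L[ℂ] H)) (hW : W ∈ unitary (H →L[ℂ] H))
    (ψ : H) (hψ : ‖ψ‖ = 1) (ε : ℝ) (hε0 : 0 ≤ ε) (hε1 : ε ≤ 1)
    (hVarU : Var ψ U ≤ ε ^ 2) (hVarW : Var ψ W ≤ ε ^ 2) :
    ‖(inner ℂ ψ ((star U * W * U * star W) ψ) : ℂ) - 1‖ ≤ 10 * ε := by
  set α : ℂ := inner ℂ ψ (U ψ) with hα
  set β : ℂ := inner ℂ ψ (W ψ) with hβ
  have hψψ : (inner ℂ ψ ψ : ℂ) = 1 := by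
    rw [inner_self_eq_norm_sq_to_K, hψ]; norm_num
  have hUψ : ‖U ψ‖ = 1 := by rw [U.norm_map_of_mem_unitary hU, hψ]
  have hWψ : ‖W ψ‖ = 1 := by rw [W.norm_map_of_mem_unitary hW, hψ]
  -- variance formulas
  have hvU : ‖U ψ - α • ψ‖ ^ 2 = 1 - ‖α‖ ^ 2 := aux_var U hU ψ hψ
  have hvW : ‖W ψ - β • ψ‖ ^ 2 = 1 - ‖β‖ ^ 2 := aux_var W hW ψ hψ
  have hα2 : 1 - ‖α‖ ^ 2 ≤ ε ^ 2 := hvU ▸ hVarU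
  have hβ2 : 1 - ‖β‖ ^ 2 ≤ ε ^ 2 := hvW ▸ hVarW
  have hα1 : ‖α‖ ≤ 1 := by
    calc ‖α‖ ≤ ‖ψ‖ * ‖U ψ‖ := norm_inner_le_norm ψ (U ψ)
    _ = 1 := by rw [hψ, hUψ, one_mul]
  have hβ1 : ‖β‖ ≤ 1 := by
    calc ‖β‖ ≤ ‖ψ‖ * ‖W ψ‖ := norm_inner_le_norm ψ (W ψ)
    _ = 1 := by rw [hψ, hWψ, one_mul]
  set e2 : H := U ψ - α • ψ with he2
  set e3 : H := W ψ - β • ψ with he3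
  have hv2 : ‖e2‖ ^ 2 ≤ ε ^ 2 := by simpa [Var, he2, hα] using hVarU
  have hv3 : ‖e3‖ ^ 2 ≤ ε ^ 2 := by simpa [Var, he3, hβ] using hVarW
  have hne2 : ‖e2‖ ≤ ε := by nlinarith [norm_nonneg e2]
  have hne3 : ‖e3‖ ≤ ε := by nlinarith [norm_nonneg e3]
  -- adjoint of W
  have hcW : (inner ℂ ψ ((star W) ψ) : ℂ) = (starRingEnd ℂ) β := by
    rw [ContinuousLinearMap.star_eq_adjoint, ContinuousLinearMap.adjoint_inner_right,
      ← inner_conj_symm, hβ]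
  set e1 : H := (star W) ψ - (starRingEnd ℂ) β • ψ with he1
  have hne1 : ‖e1‖ ≤ ε := by
    have h := aux_var (star W) (Unitary.star_mem hW) ψ hψ
    rw [hcW] at h
    have : ‖(starRingEnd ℂ) β‖ = ‖β‖ := RCLike.norm_conj β
    rw [this] at h
    nlinarith [norm_nonneg e1]
  -- key identity
  have hid : (inner ℂ ψ ((star U * W * U * star W) ψ) : ℂ) =
      inner ℂ (U ψ) (W (U e1)) + (starRingEnd ℂ) β * inner ℂ (U ψ) (W e2)
      + (starRingEnd ℂ) β * α * inner ℂ e2 e3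
      + (starRingEnd ℂ) β * α * ((starRingEnd ℂ) α * β) := by
    have hstep : (inner ℂ ψ ((star U * W * U * star W) ψ) : ℂ)
        = inner ℂ (U ψ) (W (U ((star W) ψ))) := by
      simp only [ContinuousLinearMap.mul_apply, ContinuousLinearMap.star_eq_adjoint,
        ContinuousLinearMap.adjoint_inner_right]
    rw [hstep]
    have hW1 : W (U ((star W) ψ)) = W (U e1) + (starRingEnd ℂ) β • W (U ψ) := by
      rw [he1]; simp [map_sub, map_smul]
    have hU1 : W (U ψ) = W e2 + α • W ψ := by
      rw [he2]; simp [map_sub, map_smul]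
    have hip2 : (inner ℂ e2 ψ : ℂ) = 0 := by
      rw [he2, inner_sub_left, inner_smul_left, hψψ, ← inner_conj_symm, hα, mul_one, sub_self]
    have hip3 : (inner ℂ ψ e3 : ℂ) = 0 := by
      rw [he3, inner_sub_right, inner_smul_right, hψψ, hβ, mul_one, sub_self]
    have hUW : (inner ℂ (U ψ) (W ψ) : ℂ) = inner ℂ e2 e3 + (starRingEnd ℂ) α * β := by
      have : U ψ = e2 + α • ψ := by rw [he2]; abel
      have h3 : W ψ = e3 + β • ψ := by rw [he3]; abel
      rw [this, h3, inner_add_left, inner_add_right, inner_add_right, inner_smul_left,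
        inner_smul_right, inner_smul_right, inner_smul_left, hip2, hip3, hψψ]
      ring
    rw [hW1, inner_add_right, inner_smul_right, hU1, inner_add_right, inner_smul_right, hUW]
    ring
  rw [hid]
  set t1 : ℂ := inner ℂ (U ψ) (W (U e1)) with ht1
  set t2 : ℂ := (starRingEnd ℂ) β * inner ℂ (U ψ) (W e2) with ht2
  set t3 : ℂ := (starRingEnd ℂ) β * α * inner ℂ e2 e3 with ht3
  set t4 : ℂ := (starRingEnd ℂ) β * α * ((starRingEnd ℂ) α * β) with ht4
  have hb1 : ‖t1‖ ≤ ε := by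
    calc ‖t1‖ ≤ ‖U ψ‖ * ‖W (U e1)‖ := norm_inner_le_norm _ _
    _ = ‖e1‖ := by
      rw [hUψ, W.norm_map_of_mem_unitary hW, U.norm_map_of_mem_unitary hU, one_mul]
    _ ≤ ε := hne1
  have hb2 : ‖t2‖ ≤ ε := by
    have h : ‖(inner ℂ (U ψ) (W e2) : ℂ)‖ ≤ ε := by
      calc ‖(inner ℂ (U ψ) (W e2) : ℂ)‖ ≤ ‖U ψ‖ * ‖W e2‖ := norm_inner_le_norm _ _
      _ = ‖e2‖ := by rw [hUψ, W.norm_map_of_mem_unitary hW, one_mul]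
      _ ≤ ε := hne2
    rw [ht2, norm_mul, RCLike.norm_conj]
    calc ‖β‖ * ‖(inner ℂ (U ψ) (W e2) : ℂ)‖ ≤ 1 * ε :=
      mul_le_mul hβ1 h (norm_nonneg _) zero_le_one
    _ = ε := one_mul ε
  have hb3 : ‖t3‖ ≤ ε := by
    have h23 : ‖(inner ℂ e2 e3 : ℂ)‖ ≤ ε * ε :=
      (norm_inner_le_norm _ _).trans (mul_le_mul hne2 hne3 (norm_nonneg _) hε0)
    rw [ht3, norm_mul, norm_mul, RCLike.norm_conj]
    have h : ‖β‖ * ‖α‖ * ‖(inner ℂ e2 e3 : ℂ)‖ ≤ 1 * 1 * (ε * ε) := by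
      gcongr
    nlinarith
  have hb4 : ‖t4 - 1‖ ≤ 2 * ε ^ 2 := by
    have ht4' : t4 = ((‖α‖ ^ 2 * ‖β‖ ^ 2 : ℝ) : ℂ) := by
      rw [ht4, show (starRingEnd ℂ) β * α * ((starRingEnd ℂ) α * β)
          = (α * (starRingEnd ℂ) α) * (β * (starRingEnd ℂ) β) by ring,
        Complex.mul_conj, Complex.mul_conj]
      push_cast
      rw [Complex.normSq_eq_norm_sq, Complex.normSq_eq_norm_sq]
      simp
    rw [ht4', show (1 : ℂ) = ((1 : ℝ) : ℂ) by norm_num, ← Complex.ofReal_sub,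
      Complex.norm_real, Real.norm_eq_abs, abs_le]
    constructor <;> nlinarith [norm_nonneg α, norm_nonneg β, sq_nonneg ε]
  have heq : ‖t1 + t2 + t3 + t4 - 1‖ = ‖t1 + (t2 + (t3 + (t4 - 1)))‖ := by
    congr 1; ring
  have h1 := norm_add_le t1 (t2 + (t3 + (t4 - 1)))
  have h2 := norm_add_le t2 (t3 + (t4 - 1))
  have h3 := norm_add_le t3 (t4 - 1)
  have hsq : ε ^ 2 ≤ ε := by nlinarith
  rw [heq]
  linarith
end
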